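/- Lower bound from a bank of binary tests: for any distribution Q_Y on 𝒴, ε̄ = max_{Q_Y} Σ_v P_V(v) α_{Q*_{V̂}(v)}( P_{Y|V=v}, Q_Y ), where Q*_{V̂}(v) = Σ_y Q_Y(y) P^{MAP}_{V̂|Y}(v|y); in particular the right-hand side with any fixed Q_Y is a lower bound on ε̄. -/

import Mathlib

open scoped Classical
open Finset

/-- Bank-of-binary-tests expression: `ε̄` is the maximum over output
distributions `Q_Y` of `∑_v P_V(v) α_{Q*_{V̂}(v)}(P_{Y|V=v}, Q_Y)`, where
`Q*_{V̂}(v) = ∑_y Q_Y(y) P^{MAP}(v|y)`. -/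
theorem stmt_10 {V Y : Type*} [Fintype V] [Fintype Y] [Nonempty V]
    (PV : V → ℝ) (hPVpos : ∀ v, 0 < PV v) (hPV1 : ∑ v, PV v = 1)
    (W : V → Y → ℝ) (hW0 : ∀ v y, 0 ≤ W v y) (hW1 : ∀ v, ∑ y, W v y = 1)
    -- the MAP test for the joint distribution `P_{VY}(v,y) = PV v * W v y`
    (PMAP : Y → V → ℝ)
    (hPMAP : ∀ y v, PMAP y v =
      if PV v * W v y = (⨆ v', PV v' * W v' y) then
        ((univ.filter (fun v' : V =>
            PV v' * W v' y = (⨆ v'', PV v'' * W v'' y))).card : ℝ)⁻¹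
      else 0)
    (εbar : ℝ)
    (hε : εbar = sInf {e : ℝ | ∃ T : Y → V → ℝ,
        (∀ y v, 0 ≤ T y v) ∧ (∀ y, ∑ v, T y v = 1) ∧
        e = 1 - ∑ v, ∑ y, (PV v * W v y) * T y v})
    -- `alpha β Pv QY` is the binary trade-off α_β(P_{Y|V=v}, Q_Y) on 𝒴
    (alpha : ℝ → (Y → ℝ) → (Y → ℝ) → ℝ)
    (halpha : ∀ β Pv QY, alpha β Pv QY =
      sInf {e : ℝ | ∃ T : Y → ℝ, (∀ y, 0 ≤ T y ∧ T y ≤ 1) ∧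
        (∑ y, QY y * T y) ≤ β ∧ e = ∑ y, Pv y * (1 - T y)}) :
    IsGreatest {x : ℝ | ∃ QY : Y → ℝ, (∀ y, 0 ≤ QY y) ∧ (∑ y, QY y = 1) ∧
        x = ∑ v, PV v * alpha (∑ y, QY y * PMAP y v) (W v) QY} εbar := by
  classical
  set M : Y → ℝ := fun y => ⨆ v', PV v' * W v' y with hMdef
  have hPM : ∀ y v, PMAP y v =
      if PV v * W v y = M y then
        ((univ.filter (fun v' : V => PV v' * W v' y = M y)).card : ℝ)⁻¹
      else 0 := hPMAP
  have hle : ∀ y v, PV v * W v y ≤ M y := by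
    intro y v
    exact le_ciSup (f := fun v' => PV v' * W v' y)
      (Set.Finite.bddAbove (Set.finite_range _)) v
  have hattain : ∀ y, ∃ v, PV v * W v y = M y := by
    intro y
    obtain ⟨v0, hv0⟩ := Finite.exists_max (fun v => PV v * W v y)
    exact ⟨v0, le_antisymm (hle y v0) (ciSup_le hv0)⟩
  have hM0 : ∀ y, 0 ≤ M y := by
    intro y
    have v0 := Classical.arbitrary V
    exact le_trans (mul_nonneg (hPVpos v0).le (hW0 v0 y)) (hle y v0)
  have hcardpos : ∀ y, 0 < (univ.filter (fun v' : V => PV v' * W v' y = M y)).card := by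
    intro y
    obtain ⟨v, hv⟩ := hattain y
    exact card_pos.mpr ⟨v, mem_filter.mpr ⟨mem_univ v, hv⟩⟩
  have hPM01 : ∀ y v, 0 ≤ PMAP y v ∧ PMAP y v ≤ 1 := by
    intro y v
    rw [hPM]
    split
    · have hc := hcardpos y
      constructor
      · positivity
      · rw [inv_le_one_iff₀]
        right
        exact_mod_cast hc
    · exact ⟨le_refl 0, zero_le_one⟩
  -- PMAP sums to 1 over v
  have hPMsum : ∀ y, ∑ v, PMAP y v = 1 := by
    intro y
    have : ∑ v, PMAP y v =
        ∑ v ∈ univ.filter (fun v' : V => PV v' * W v' y = M y),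
          (((univ.filter (fun v' : V => PV v' * W v' y = M y)).card : ℝ))⁻¹ := by
      rw [Finset.sum_filter]
      exact Finset.sum_congr rfl fun v _ => hPM y v
    rw [this, Finset.sum_const, nsmul_eq_mul]
    have hc : ((univ.filter (fun v' : V => PV v' * W v' y = M y)).card : ℝ) ≠ 0 := by
      exact_mod_cast (hcardpos y).ne'
    field_simp
  -- key pointwise identity
  have hkey : ∀ y v, (PV v * W v y) * PMAP y v = M y * PMAP y v := by
    intro y v
    rw [hPM]
    split
    · next h => rw [h]
    · ring
  have hMAPsum : ∀ y, ∑ v, (PV v * W v y) * PMAP y v = M y := by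
    intro y
    calc ∑ v, (PV v * W v y) * PMAP y v = ∑ v, M y * PMAP y v :=
          Finset.sum_congr rfl fun v _ => hkey y v
      _ = M y * ∑ v, PMAP y v := by rw [Finset.mul_sum]
      _ = M y := by rw [hPMsum y, mul_one]
  -- εbar = 1 - ∑ y, M y
  have hεval : εbar = 1 - ∑ y, M y := by
    rw [hε]
    have hmem : (1 - ∑ y, M y) ∈ {e : ℝ | ∃ T : Y → V → ℝ,
        (∀ y v, 0 ≤ T y v) ∧ (∀ y, ∑ v, T y v = 1) ∧
        e = 1 - ∑ v, ∑ y, (PV v * W v y) * T y v} := by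
      refine ⟨fun y v => PMAP y v, fun y v => (hPM01 y v).1, hPMsum, ?_⟩
      rw [Finset.sum_comm]
      congr 1
      exact (Finset.sum_congr rfl fun y _ => hMAPsum y).symm
    have hlb : ∀ e ∈ {e : ℝ | ∃ T : Y → V → ℝ,
        (∀ y v, 0 ≤ T y v) ∧ (∀ y, ∑ v, T y v = 1) ∧
        e = 1 - ∑ v, ∑ y, (PV v * W v y) * T y v}, 1 - ∑ y, M y ≤ e := by
      rintro e ⟨T, hT0, hT1, rfl⟩
      have : ∑ v, ∑ y, (PV v * W v y) * T y v ≤ ∑ y, M y := by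
        rw [Finset.sum_comm]
        refine Finset.sum_le_sum fun y _ => ?_
        calc ∑ v, (PV v * W v y) * T y v ≤ ∑ v, M y * T y v :=
              Finset.sum_le_sum fun v _ => mul_le_mul_of_nonneg_right (hle y v) (hT0 y v)
          _ = M y * ∑ v, T y v := by rw [Finset.mul_sum]
          _ = M y := by rw [hT1 y, mul_one]
      linarith
    exact le_antisymm (csInf_le ⟨1 - ∑ y, M y, hlb⟩ hmem) (le_csInf ⟨_, hmem⟩ hlb)
  -- boundedness below of the alpha sets
  have halphaLB : ∀ (Pv QY : Y → ℝ) (β : ℝ), (∀ y, 0 ≤ Pv y) →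
      ∀ e ∈ {e : ℝ | ∃ T : Y → ℝ, (∀ y, 0 ≤ T y ∧ T y ≤ 1) ∧
        (∑ y, QY y * T y) ≤ β ∧ e = ∑ y, Pv y * (1 - T y)}, (0:ℝ) ≤ e := by
    rintro Pv QY β hPv0 e ⟨T, hT01, hTβ, rfl⟩
    exact Finset.sum_nonneg fun y _ =>
      mul_nonneg (hPv0 y) (by linarith [(hT01 y).2])
  -- upper bound on alpha via the MAP column test, for ANY QY
  have halphaUB : ∀ (QY : Y → ℝ), (∀ y, 0 ≤ QY y) → ∀ v,
      alpha (∑ y, QY y * PMAP y v) (W v) QY ≤ ∑ y, W v y * (1 - PMAP y v) := by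
    intro QY hQY0 v
    rw [halpha]
    refine csInf_le ⟨0, halphaLB (W v) QY _ (hW0 v)⟩ ?_
    exact ⟨fun y => PMAP y v, fun y => hPM01 y v, le_refl _, rfl⟩
  constructor
  · -- membership: take QY = M / S
    set S : ℝ := ∑ y, M y with hSdef
    have hSpos : 0 < S := by
      have v0 := Classical.arbitrary V
      have h1 : ∑ y, PV v0 * W v0 y ≤ S := Finset.sum_le_sum fun y _ => hle y v0
      have h2 : ∑ y, PV v0 * W v0 y = PV v0 := by
        rw [← Finset.mul_sum, hW1 v0, mul_one]
      linarith [hPVpos v0]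
    set QY : Y → ℝ := fun y => M y / S with hQYdef
    have hQY0 : ∀ y, 0 ≤ QY y := fun y => div_nonneg (hM0 y) hSpos.le
    have hQY1 : ∑ y, QY y = 1 := by
      simp only [hQYdef]
      rw [← Finset.sum_div, ← hSdef, div_self hSpos.ne']
    refine ⟨QY, hQY0, hQY1, ?_⟩
    -- exact value of alpha for each v
    have halphaval : ∀ v,
        alpha (∑ y, QY y * PMAP y v) (W v) QY
          = 1 - (S / PV v) * (∑ y, QY y * PMAP y v) := by
      intro v
      have ht0 : 0 ≤ S / PV v := div_nonneg hSpos.le (hPVpos v).le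
      have hPv := (hPVpos v).ne'
      have hfrac : ∀ y, (S / PV v) * QY y = M y / PV v := by
        intro y
        simp only [hQYdef]
        field_simp
      have hdom : ∀ y, W v y ≤ (S / PV v) * QY y := by
        intro y
        rw [hfrac y, le_div_iff₀ (hPVpos v), mul_comm]
        exact hle y v
      have hpt : ∀ y, W v y * PMAP y v = (S / PV v) * (QY y * PMAP y v) := by
        intro y
        by_cases h : PMAP y v = 0
        · rw [h]; ring
        · have heq : PV v * W v y = M y := by
            by_contra hne
            exact h (by rw [hPM]; simp [hne])
          have : W v y = (S / PV v) * QY y := by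
            rw [hfrac y, eq_div_iff (hPVpos v).ne', mul_comm]
            exact heq
          rw [this]; ring
      have hvalue : ∑ y, W v y * (1 - PMAP y v)
          = 1 - (S / PV v) * (∑ y, QY y * PMAP y v) := by
        have : ∑ y, W v y * (1 - PMAP y v)
            = ∑ y, W v y - ∑ y, W v y * PMAP y v := by
          rw [← Finset.sum_sub_distrib]
          exact Finset.sum_congr rfl fun y _ => by ring
        rw [this, hW1 v]
        congr 1
        rw [Finset.mul_sum]
        exact Finset.sum_congr rfl fun y _ => hpt y
      refine le_antisymm (le_of_le_of_eq (halphaUB QY hQY0 v) hvalue) ?_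
      rw [halpha]
      refine le_csInf ⟨_, ⟨fun y => PMAP y v, fun y => hPM01 y v, le_refl _, rfl⟩⟩ ?_
      rintro e ⟨T, hT01, hTβ, rfl⟩
      have hsum1 : ∑ y, W v y * T y ≤ (S / PV v) * ∑ y, QY y * T y := by
        rw [Finset.mul_sum]
        refine Finset.sum_le_sum fun y _ => ?_
        rw [← mul_assoc]
        exact mul_le_mul_of_nonneg_right (hdom y) (hT01 y).1
      have hsum2 : (S / PV v) * ∑ y, QY y * T y ≤ (S / PV v) * ∑ y, QY y * PMAP y v :=
        mul_le_mul_of_nonneg_left hTβ ht0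
      have hexp : ∑ y, W v y * (1 - T y) = 1 - ∑ y, W v y * T y := by
        have : ∑ y, W v y * (1 - T y) = ∑ y, W v y - ∑ y, W v y * T y := by
          rw [← Finset.sum_sub_distrib]
          exact Finset.sum_congr rfl fun y _ => by ring
        rw [this, hW1 v]
      rw [hexp]
      linarith
    -- now compute the sum
    have hbsum : ∑ v, ∑ y, QY y * PMAP y v = 1 := by
      rw [Finset.sum_comm]
      calc ∑ y, ∑ v, QY y * PMAP y v = ∑ y, QY y * ∑ v, PMAP y v := by
            exact Finset.sum_congr rfl fun y _ => (Finset.mul_sum _ _ _).symm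
        _ = ∑ y, QY y := Finset.sum_congr rfl fun y _ => by rw [hPMsum y, mul_one]
        _ = 1 := hQY1
    calc εbar = 1 - S := by rw [hεval]
      _ = ∑ v, PV v - S * ∑ v, ∑ y, QY y * PMAP y v := by rw [hPV1, hbsum, mul_one]
      _ = ∑ v, (PV v - S * ∑ y, QY y * PMAP y v) := by
          rw [Finset.sum_sub_distrib, Finset.mul_sum]
      _ = ∑ v, PV v * alpha (∑ y, QY y * PMAP y v) (W v) QY := by
          refine Finset.sum_congr rfl fun v _ => ?_
          have hPv := (hPVpos v).ne'
          have hc : PV v * (S / PV v) = S := by field_simp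
          rw [halphaval v, mul_sub, mul_one, ← mul_assoc, hc]
  · -- upper bound: any element of the set is ≤ εbar
    rintro x ⟨QY, hQY0, hQY1, rfl⟩
    have hstep : ∑ v, PV v * alpha (∑ y, QY y * PMAP y v) (W v) QY
        ≤ ∑ v, PV v * ∑ y, W v y * (1 - PMAP y v) :=
      Finset.sum_le_sum fun v _ =>
        mul_le_mul_of_nonneg_left (halphaUB QY hQY0 v) (hPVpos v).le
    have hval : ∑ v, PV v * ∑ y, W v y * (1 - PMAP y v) = 1 - ∑ y, M y := by
      have h1 : ∀ v, PV v * ∑ y, W v y * (1 - PMAP y v)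
          = PV v - ∑ y, (PV v * W v y) * PMAP y v := by
        intro v
        rw [Finset.mul_sum]
        have : ∑ y, PV v * (W v y * (1 - PMAP y v))
            = ∑ y, (PV v * W v y - (PV v * W v y) * PMAP y v) :=
          Finset.sum_congr rfl fun y _ => by ring
        rw [this, Finset.sum_sub_distrib, ← Finset.mul_sum, hW1 v, mul_one]
      calc ∑ v, PV v * ∑ y, W v y * (1 - PMAP y v)
          = ∑ v, (PV v - ∑ y, (PV v * W v y) * PMAP y v) :=
            Finset.sum_congr rfl fun v _ => h1 v
        _ = ∑ v, PV v - ∑ v, ∑ y, (PV v * W v y) * PMAP y v := Finset.sum_sub_distrib _ _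
        _ = 1 - ∑ y, ∑ v, (PV v * W v y) * PMAP y v := by rw [hPV1, Finset.sum_comm]
        _ = 1 - ∑ y, M y := by
            congr 1
            exact Finset.sum_congr rfl fun y _ => hMAPsum y
    rw [hεval]
    calc ∑ v, PV v * alpha (∑ y, QY y * PMAP y v) (W v) QY
        ≤ ∑ v, PV v * ∑ y, W v y * (1 - PMAP y v) := hstep
      _ = 1 - ∑ y, M y := hval
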